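/- With notation as in the generalized mutation setup (A the l×l cyclic permutation matrix, C = Σ C_i, B = Σ B_i, C_i^t = A^{i+1} B_i for 0 ≤ i ≤ l-3, S = [[-A^{-1},0],[Σ_i C_i Σ_{j=0}^i A^j, I]]), the bottom-left block of S M S^t equals Σ_{i=0}^{l-3} C_i − Σ_{i=0}^{l-3} B_i^t + (A^{l-1} B_{l-2})^t − C_{l-2} A^{l-1}. -/

import Mathlib

open Matrix

/-- The `l × l` cyclic permutation matrix with `A i (i+1) = 1` (indices mod `l`). -/
def cyc (l : ℕ) [NeZero l] : Matrix (Fin l) (Fin l) ℤ :=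
  Matrix.of fun i j => if j = i + 1 then 1 else 0


section CycLemmas
open Finset
open Fin.NatCast

lemma cyc_pow (l : ℕ) [NeZero l] (n : ℕ) :
    (cyc l) ^ n = Matrix.of fun i j => if j = i + (n : Fin l) then 1 else 0 := by
  induction n with
  | zero => ext i j; simp [Matrix.one_apply, eq_comm]
  | succ n ih =>
      rw [pow_succ, ih]
      ext i j
      simp only [Matrix.mul_apply, Matrix.of_apply, cyc, ite_mul, one_mul, zero_mul,
        Finset.sum_ite_eq', Finset.mem_univ, if_true]
      push_cast
      rw [add_assoc]

lemma cyc_mul_transpose (l : ℕ) [NeZero l] : cyc l * (cyc l)ᵀ = 1 := by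
  ext i j
  simp only [Matrix.mul_apply, Matrix.transpose_apply, cyc, Matrix.of_apply, ite_mul, one_mul,
    zero_mul, Finset.sum_ite_eq', Finset.mem_univ, if_true, Matrix.one_apply]
  by_cases h : i = j <;> simp [h]

lemma transpose_mul_cyc (l : ℕ) [NeZero l] : (cyc l)ᵀ * cyc l = 1 :=
  mul_eq_one_comm.mp (cyc_mul_transpose l)

lemma cyc_pow_self (l : ℕ) [NeZero l] : (cyc l) ^ l = 1 := by
  rw [cyc_pow]
  ext i j
  simp [Matrix.one_apply, Fin.natCast_self, eq_comm]

lemma cyc_transpose (l : ℕ) [NeZero l] : (cyc l)ᵀ = (cyc l) ^ (l - 1) := by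
  have h1 : ((l - 1 : ℕ) : Fin l) + 1 = 0 := by
    have : (1:ℕ) ≤ l := Nat.one_le_iff_ne_zero.mpr (NeZero.ne l)
    rw [show ((1:Fin l) = ((1:ℕ):Fin l)) from by norm_cast, ← Nat.cast_add,
      Nat.sub_add_cancel this, Fin.natCast_self]
  rw [cyc_pow]
  ext i j
  simp only [Matrix.transpose_apply, cyc, Matrix.of_apply]
  congr 1
  rw [eq_iff_iff]
  constructor
  · rintro rfl; rw [add_assoc, add_comm 1, ← add_assoc, add_assoc, h1, add_zero]
  · rintro rfl; rw [add_assoc, h1, add_zero]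

lemma tpow_mul_pow (l : ℕ) [NeZero l] (n : ℕ) : ((cyc l)ᵀ) ^ n * (cyc l) ^ n = 1 := by
  induction n with
  | zero => simp
  | succ n ih =>
    rw [pow_succ, pow_succ', mul_assoc, ← mul_assoc (cyc l)ᵀ, transpose_mul_cyc, one_mul, ih]

lemma cyc_pow_pred_transpose (l : ℕ) [NeZero l] (hl : 2 ≤ l) :
    ((cyc l) ^ (l - 1))ᵀ = cyc l := by
  obtain ⟨k, rfl⟩ := Nat.exists_eq_add_of_le hl
  rw [Matrix.transpose_pow, cyc_transpose, ← pow_mul,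
    show (2+k-1)*(2+k-1) = (2+k)*(2+k-2) + 1 by
      rw [show 2+k-1 = k+1 by omega, show 2+k-2 = k by omega]; ring,
    pow_succ, pow_mul, cyc_pow_self, one_pow, one_mul]

end CycLemmas

/-- In the generalized mutation `M' = S M Sᵀ`, the bottom-left block equals
`∑_{i=0}^{l-3} Cᵢ − ∑_{i=0}^{l-3} Bᵢᵀ + (A^{l-1} B_{l-2})ᵀ − C_{l-2} A^{l-1}`. -/
theorem mut_block_bottomleft (l : ℕ) (hl : 3 ≤ l) [NeZero l]
    {m : Type} [Fintype m] [DecidableEq m]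
    (Bf : ℕ → Matrix (Fin l) m ℤ) (Cf : ℕ → Matrix m (Fin l) ℤ)
    (D : Matrix m m ℤ)
    (hrel : ∀ i ≤ l - 3, (Cf i)ᵀ = cyc l ^ (i + 1) * Bf i) :
    let A := cyc l
    let B := ∑ i ∈ Finset.range (l - 1), Bf i
    let C := ∑ i ∈ Finset.range (l - 1), Cf i
    let M := fromBlocks (A - Aᵀ) (B - Cᵀ) (C - Bᵀ) (D - Dᵀ)
    let S := fromBlocks (-A⁻¹) 0
      (∑ i ∈ Finset.range (l - 1), Cf i * ∑ j ∈ Finset.range (i + 1), A ^ j) 1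
    (S * M * Sᵀ).toBlocks₂₁ =
      (∑ i ∈ Finset.range (l - 2), Cf i) - (∑ i ∈ Finset.range (l - 2), (Bf i)ᵀ) +
        (A ^ (l - 1) * Bf (l - 2))ᵀ - Cf (l - 2) * A ^ (l - 1) := by
  intro A B C M S
  have hAinv : A⁻¹ = Aᵀ := Matrix.inv_eq_right_inv (cyc_mul_transpose l)
  simp only [S, M, hAinv, fromBlocks_transpose, fromBlocks_multiply, toBlocks_fromBlocks₂₁,
    Matrix.transpose_neg, Matrix.transpose_transpose, Matrix.transpose_zero,
    Matrix.transpose_one, Matrix.mul_zero, Matrix.zero_mul, Matrix.one_mul, Matrix.mul_one,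
    add_zero, zero_add]
  have hgeom : ∀ i : ℕ, (∑ j ∈ Finset.range (i+1), A^j) * (A^2 - 1)
      = A^(i+2) + A^(i+1) - A - 1 := by
    intro i
    have h1 : (∑ j ∈ Finset.range (i+1), A^j) * (A^2 - 1)
        = ((∑ j ∈ Finset.range (i+1), A^j) * (A - 1)) * (A + 1) := by noncomm_ring
    rw [h1, geom_sum_mul, sub_mul, mul_add, mul_one, one_mul, ← pow_succ]
    abel
  have hkey : (A - Aᵀ) * (-A) = -(A^2 - 1) := by
    rw [sub_mul, mul_neg, mul_neg, transpose_mul_cyc, ← sq]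
    abel
  have hCpow : ∀ i ≤ l - 3, Cf i * A ^ (i+1) = (Bf i)ᵀ := by
    intro i hi
    have h1 : Cf i = (Bf i)ᵀ * (Aᵀ) ^ (i+1) := by
      have := congrArg Matrix.transpose (hrel i hi)
      rwa [Matrix.transpose_transpose, Matrix.transpose_mul, Matrix.transpose_pow] at this
    rw [h1, Matrix.mul_assoc, tpow_mul_pow, Matrix.mul_one]
  have hCpow2 : ∀ i ≤ l - 3, Cf i * A ^ (i+2) = (Bf i)ᵀ * A := by
    intro i hi
    rw [show i+2 = (i+1)+1 from rfl, pow_succ, ← Matrix.mul_assoc, hCpow i hi]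
  have hE1 : (∑ i ∈ Finset.range (l - 1), Cf i * ∑ j ∈ Finset.range (i + 1), A ^ j)
        * (A - Aᵀ) * (-A)
      = ∑ i ∈ Finset.range (l-1),
          (Cf i + Cf i * A - Cf i * A^(i+1) - Cf i * A^(i+2)) := by
    rw [Matrix.mul_assoc, hkey, Matrix.mul_neg, Matrix.sum_mul, ← Finset.sum_neg_distrib]
    refine Finset.sum_congr rfl fun i _ => ?_
    rw [Matrix.mul_assoc, hgeom i, Matrix.mul_sub, Matrix.mul_sub, Matrix.mul_add,
      Matrix.mul_one]
    abel
  have hC : C * A = ∑ i ∈ Finset.range (l-1), Cf i * A := Matrix.sum_mul _ _ _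
  have hB : Bᵀ * A = ∑ i ∈ Finset.range (l-1), (Bf i)ᵀ * A := by
    show (∑ i ∈ Finset.range (l - 1), Bf i)ᵀ * A = _
    rw [Matrix.transpose_sum, Matrix.sum_mul]
  have hLHS : ((∑ i ∈ Finset.range (l - 1), Cf i * ∑ j ∈ Finset.range (i + 1), A ^ j)
        * (A - Aᵀ) + (C - Bᵀ)) * -A
      = ∑ i ∈ Finset.range (l-1),
          (Cf i - Cf i * A^(i+1) - Cf i * A^(i+2) + (Bf i)ᵀ * A) := by
    rw [Matrix.add_mul, hE1, Matrix.sub_mul, Matrix.mul_neg, Matrix.mul_neg, hC, hB]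
    simp only [← Finset.sum_neg_distrib, ← Finset.sum_sub_distrib, ← Finset.sum_add_distrib]
    refine Finset.sum_congr rfl fun i _ => ?_
    abel
  rw [hLHS, show Finset.range (l-1) = Finset.range ((l-2)+1) from by rw [show (l-2)+1 = l-1 by omega],
    Finset.sum_range_succ]
  have hlast : Cf (l-2) - Cf (l-2) * A^((l-2)+1) - Cf (l-2) * A^((l-2)+2) + (Bf (l-2))ᵀ * A
      = (A ^ (l - 1) * Bf (l - 2))ᵀ - Cf (l - 2) * A ^ (l - 1) := by
    rw [show (l-2)+1 = l-1 by omega, show (l-2)+2 = l by omega, cyc_pow_self, Matrix.mul_one,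
      Matrix.transpose_mul, cyc_pow_pred_transpose l (by omega)]
    abel
  rw [hlast]
  have hsum : ∑ i ∈ Finset.range (l-2),
        (Cf i - Cf i * A^(i+1) - Cf i * A^(i+2) + (Bf i)ᵀ * A)
      = ∑ i ∈ Finset.range (l-2), (Cf i - (Bf i)ᵀ) := by
    refine Finset.sum_congr rfl fun i hi => ?_
    have hi3 : i ≤ l - 3 := by have := Finset.mem_range.mp hi; omega
    rw [hCpow i hi3, hCpow2 i hi3]
    abel
  rw [hsum, Finset.sum_sub_distrib]
  abel
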